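/- For any partition μ, with z_i(μ) = t^{-l(μ)+i} q^{μ_i}, one has (1-t)·Σ_{1≤i<j≤l(μ)} z_i(μ)/z_j(μ) = (q^{-1}-1)·Σ_{□∈μ} q^{a_μ(□)+1} t^{-l_μ(□)} + Σ_{i=1}^{l(μ)} (z_i(μ) - 1). -/

import Mathlib

open Finset

/-- A partition: weakly decreasing sequence of naturals, with `len` nonzero parts
(0-based indexing: `part 0 = μ₁`). -/
structure YDPartition where
  part : ℕ → ℕ
  len : ℕ
  antitone : ∀ ⦃i j : ℕ⦄, i ≤ j → part j ≤ part i
  pos_iff : ∀ i, i < len ↔ 0 < part i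

/-- Height of the (0-based) column `c` of the Young diagram. -/
def colHeight (p : ℕ → ℕ) (l c : ℕ) : ℕ :=
  ((Finset.range l).filter (fun r => c < p r)).card

/-- Arm length of the cell in (0-based) row `r`, column `c`. -/
def armZ (p : ℕ → ℕ) (r c : ℕ) : ℤ := (p r : ℤ) - 1 - c

/-- Leg length of the cell in (0-based) row `r`, column `c`. -/
def legZ (p : ℕ → ℕ) (l r c : ℕ) : ℤ :=
  (colHeight p l c : ℤ) - 1 - r

private lemma geom_up {K : Type*} [Field K] {t : K} (ht : t ≠ 0) (e : ℤ) (n : ℕ) :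
    (1 - t) * ∑ i ∈ range n, t ^ ((i : ℤ) + e) = t ^ e - t ^ ((n : ℤ) + e) := by
  induction n with
  | zero => simp
  | succ n ih =>
    rw [sum_range_succ, mul_add, ih]
    have h1 : (((n : ℕ) + 1 : ℕ) : ℤ) + e = ((n : ℤ) + e) + 1 := by push_cast; ring
    rw [h1, zpow_add_one₀ ht]
    ring

private lemma geom_down_q {K : Type*} [Field K] {q : K} (hq : q ≠ 0) (e : ℤ) (a b : ℕ)
    (hab : a ≤ b) :
    (q⁻¹ - 1) * ∑ c ∈ Finset.Ico a b, q ^ (e - (c : ℤ)) = q ^ (e - (b : ℤ)) - q ^ (e - (a : ℤ)) := by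
  induction b, hab using Nat.le_induction with
  | base => simp
  | succ b hb ih =>
    rw [Finset.sum_Ico_succ_top hb, mul_add, ih]
    have h1 : e - (((b : ℕ) + 1 : ℕ) : ℤ) = (e - (b : ℤ)) - 1 := by push_cast; ring
    rw [h1, zpow_sub_one₀ hq]
    ring

private lemma geom_down_t {K : Type*} [Field K] {t : K} (ht : t ≠ 0) (e : ℤ) (a b : ℕ)
    (hab : a ≤ b) :
    (1 - t) * ∑ j ∈ Finset.Ico a b, t ^ (e - (j : ℤ)) =
      t ^ (e + 1 - (b : ℤ)) - t ^ (e + 1 - (a : ℤ)) := by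
  induction b, hab using Nat.le_induction with
  | base => simp
  | succ b hb ih =>
    rw [Finset.sum_Ico_succ_top hb, mul_add, ih]
    have h1 : e + 1 - (((b : ℕ) + 1 : ℕ) : ℤ) = e - (b : ℤ) := by push_cast; ring
    have h2 : e + 1 - (b : ℤ) = (e - (b : ℤ)) + 1 := by ring
    rw [h1, h2, zpow_add_one₀ ht]
    ring

private lemma colHeight_key (p : ℕ → ℕ) (l : ℕ)
    (hanti : ∀ ⦃i j : ℕ⦄, i ≤ j → p j ≤ p i) {c j : ℕ} (hj : j < l) :
    c < p j ↔ j < colHeight p l c := by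
  constructor
  · intro h
    have hsub : range (j + 1) ⊆ (range l).filter (fun r => c < p r) := by
      intro i hi
      simp only [mem_range] at hi
      have hij : i ≤ j := Nat.le_of_lt_succ hi
      simp only [mem_filter, mem_range]
      exact ⟨lt_of_le_of_lt hij hj, lt_of_lt_of_le h (hanti hij)⟩
    have := card_le_card hsub
    simpa [colHeight] using this
  · intro h
    by_contra hc
    push_neg at hc
    have hsub : (range l).filter (fun r => c < p r) ⊆ range j := by
      intro i hi
      simp only [mem_filter, mem_range] at hi ⊢
      by_contra hij
      push_neg at hij
      exact absurd (hanti hij) (by omega)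
    have := card_le_card hsub
    simp only [card_range] at this
    exact absurd h (by simp only [colHeight]; omega)

/-- with `z_i(μ) = t^{-l(μ)+i} q^{μ_i}` (1-based `i`; 0-based below),
`(1-t)·Σ_{i<j} z_i(μ)/z_j(μ)
  = (q⁻¹-1)·Σ_{□∈μ} q^{a_μ(□)+1} t^{-l_μ(□)} + Σ_{i=1}^{l(μ)} (z_i(μ) - 1)`. -/
theorem one_sub_t_sum_ratios {K : Type*} [Field K] (q t : K) (hq : q ≠ 0) (ht : t ≠ 0)
    (μ : YDPartition) :
    (1 - t) * ∑ j ∈ range μ.len, ∑ i ∈ range j,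
        (t ^ ((i : ℤ) + 1 - μ.len) * q ^ (μ.part i : ℤ)) /
          (t ^ ((j : ℤ) + 1 - μ.len) * q ^ (μ.part j : ℤ)) =
      (q⁻¹ - 1) * (∑ r ∈ range μ.len, ∑ c ∈ range (μ.part r),
          q ^ (armZ μ.part r c + 1) * t ^ (-(legZ μ.part μ.len r c))) +
        ∑ i ∈ range μ.len, (t ^ ((i : ℤ) + 1 - μ.len) * q ^ (μ.part i : ℤ) - 1) := by
  set l := μ.len with hldef
  set p := μ.part with hpdef
  have hanti : ∀ ⦃i j : ℕ⦄, i ≤ j → p j ≤ p i := μ.antitone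
  have hkey : ∀ {c j : ℕ}, j < l → (c < p j ↔ j < colHeight p l c) :=
    fun {c j} hj => colHeight_key p l hanti hj
  have hHle : ∀ c, colHeight p l c ≤ l := by
    intro c
    calc colHeight p l c ≤ (range l).card := card_filter_le _ _
    _ = l := card_range l
  -- notation for the various sums
  -- step 1 : simplify ratios
  have step1 : (1 - t) * ∑ j ∈ range l, ∑ i ∈ range j,
        (t ^ ((i : ℤ) + 1 - l) * q ^ (p i : ℤ)) / (t ^ ((j : ℤ) + 1 - l) * q ^ (p j : ℤ))
      = ∑ j ∈ range l, ((1 - t) * ∑ i ∈ range j,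
          t ^ ((i : ℤ) - (j : ℤ)) * q ^ ((p i : ℤ) - (p j : ℤ))) := by
    rw [mul_sum]
    refine sum_congr rfl fun j hj => ?_
    congr 1
    refine sum_congr rfl fun i hi => ?_
    rw [mul_div_mul_comm, ← zpow_sub₀ ht, ← zpow_sub₀ hq]
    have he : ((i : ℤ) + 1 - l) - ((j : ℤ) + 1 - l) = (i : ℤ) - j := by ring
    rw [he]
  -- step 2 : expand q-powers along arms
  have step2 : ∀ j ∈ range l, (1 - t) * ∑ i ∈ range j,
        t ^ ((i : ℤ) - (j : ℤ)) * q ^ ((p i : ℤ) - (p j : ℤ))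
      = ((1 - t) * ∑ i ∈ range j, t ^ ((i : ℤ) + -(j : ℤ)))
        - ∑ i ∈ range j, ∑ c ∈ Finset.Ico (p j) (p i),
            ((q⁻¹ - 1) * q ^ ((p i : ℤ) - (c : ℤ))) * ((1 - t) * t ^ ((i : ℤ) - (j : ℤ))) := by
    intro j hj
    rw [mul_sum, mul_sum, ← sum_sub_distrib]
    refine sum_congr rfl fun i hi => ?_
    have hple : p j ≤ p i := hanti (le_of_lt (mem_range.1 hi))
    have hq2 : q ^ ((p i : ℤ) - (p j : ℤ))
        = 1 - (q⁻¹ - 1) * ∑ c ∈ Finset.Ico (p j) (p i), q ^ ((p i : ℤ) - (c : ℤ)) := by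
      rw [geom_down_q hq _ _ _ hple, sub_self, zpow_zero]
      ring
    rw [hq2]
    have he : (i : ℤ) + -(j : ℤ) = (i : ℤ) - j := by ring
    rw [he, Finset.mul_sum, mul_sub, mul_one, mul_sub]
    congr 1
    rw [Finset.mul_sum, Finset.mul_sum]
    refine sum_congr rfl fun c hc => ?_
    ring
  -- the triple-sum reindexing
  have stepB : ∑ j ∈ range l, ∑ i ∈ range j, ∑ c ∈ Finset.Ico (p j) (p i),
        ((q⁻¹ - 1) * q ^ ((p i : ℤ) - (c : ℤ))) * ((1 - t) * t ^ ((i : ℤ) - (j : ℤ)))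
      = ∑ i ∈ range l, ∑ c ∈ range (p i), ∑ j ∈ Finset.Ico (colHeight p l c) l,
        ((q⁻¹ - 1) * q ^ ((p i : ℤ) - (c : ℤ))) * ((1 - t) * t ^ ((i : ℤ) - (j : ℤ))) := by
    rw [Finset.sum_comm' (t' := range l) (s' := fun i => Finset.Ico (i + 1) l)
      (by
        intro j i
        simp only [mem_range, Finset.mem_Ico]
        omega)]
    refine sum_congr rfl fun i hi => ?_
    have hil : i < l := mem_range.1 hi
    rw [Finset.sum_comm' (t' := range (p i)) (s' := fun c => Finset.Ico (colHeight p l c) l)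
      (by
        intro j c
        simp only [Finset.mem_Ico, mem_range]
        constructor
        · rintro ⟨⟨hij, hjl⟩, hpj, hci⟩
          refine ⟨⟨?_, hjl⟩, hci⟩
          by_contra hh
          push_neg at hh
          exact absurd ((hkey (c := c) hjl).mpr hh) (by omega)
        · rintro ⟨⟨hHj, hjl⟩, hci⟩
          have h1 : ¬ c < p j := fun hh => absurd ((hkey (c := c) hjl).mp hh) (by omega)
          have h2 : i < colHeight p l c := (hkey (c := c) hil).mp hci
          exact ⟨⟨by omega, hjl⟩, by omega, hci⟩)]
  -- telescope the inner j-sum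
  have stepT : ∀ i ∈ range l, ∀ c ∈ range (p i),
      ∑ j ∈ Finset.Ico (colHeight p l c) l,
          ((q⁻¹ - 1) * q ^ ((p i : ℤ) - (c : ℤ))) * ((1 - t) * t ^ ((i : ℤ) - (j : ℤ)))
        = ((q⁻¹ - 1) * q ^ ((p i : ℤ) - (c : ℤ)))
            * (t ^ ((i : ℤ) + 1 - l) - t ^ ((i : ℤ) + 1 - (colHeight p l c : ℤ))) := by
    intro i hi c hc
    rw [← Finset.mul_sum, ← Finset.mul_sum, geom_down_t ht _ _ _ (hHle c)]
  -- split the double sum B into the column part and the z part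
  have hBU : ∑ i ∈ range l, ∑ c ∈ range (p i),
        ((q⁻¹ - 1) * q ^ ((p i : ℤ) - (c : ℤ)))
          * (t ^ ((i : ℤ) + 1 - l) - t ^ ((i : ℤ) + 1 - (colHeight p l c : ℤ)))
      = (∑ i ∈ range l, (t ^ ((i : ℤ) + 1 - l) - t ^ ((i : ℤ) + 1 - l) * q ^ ((p i : ℤ))))
        - ∑ i ∈ range l, ∑ c ∈ range (p i),
            (q⁻¹ - 1) * (q ^ ((p i : ℤ) - (c : ℤ)) * t ^ ((i : ℤ) + 1 - (colHeight p l c : ℤ))) := by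
    rw [← sum_sub_distrib]
    refine sum_congr rfl fun i hi => ?_
    have hsplit : ∀ c ∈ range (p i),
        ((q⁻¹ - 1) * q ^ ((p i : ℤ) - (c : ℤ)))
            * (t ^ ((i : ℤ) + 1 - l) - t ^ ((i : ℤ) + 1 - (colHeight p l c : ℤ)))
          = ((q⁻¹ - 1) * q ^ ((p i : ℤ) - (c : ℤ))) * t ^ ((i : ℤ) + 1 - l)
            - (q⁻¹ - 1) * (q ^ ((p i : ℤ) - (c : ℤ)) * t ^ ((i : ℤ) + 1 - (colHeight p l c : ℤ))) := by
      intro c hc; ring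
    rw [sum_congr rfl hsplit, sum_sub_distrib]
    congr 1
    rw [← Finset.sum_mul, ← Finset.mul_sum, Finset.range_eq_Ico,
      geom_down_q hq _ 0 _ (Nat.zero_le _)]
    have e1 : (p i : ℤ) - (p i : ℤ) = 0 := sub_self _
    have e2 : (p i : ℤ) - ((0 : ℕ) : ℤ) = (p i : ℤ) := by push_cast; ring
    rw [e1, e2, zpow_zero]
    ring
  -- rewrite the arm/leg sum
  have hM2 : (q⁻¹ - 1) * (∑ r ∈ range l, ∑ c ∈ range (p r),
        q ^ (armZ p r c + 1) * t ^ (-(legZ p l r c)))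
      = ∑ i ∈ range l, ∑ c ∈ range (p i),
          (q⁻¹ - 1) * (q ^ ((p i : ℤ) - (c : ℤ)) * t ^ ((i : ℤ) + 1 - (colHeight p l c : ℤ))) := by
    rw [Finset.mul_sum]
    refine sum_congr rfl fun r hr => ?_
    rw [Finset.mul_sum]
    refine sum_congr rfl fun c hc => ?_
    have e1 : armZ p r c + 1 = (p r : ℤ) - (c : ℤ) := by unfold armZ; ring
    have e2 : -(legZ p l r c) = (r : ℤ) + 1 - (colHeight p l c : ℤ) := by unfold legZ; ring
    rw [e1, e2]
  -- the purely-t identity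
  have hrefl : ∑ i ∈ range l, t ^ (-(i : ℤ)) = ∑ i ∈ range l, t ^ ((i : ℤ) + 1 - l) := by
    rw [← Finset.sum_range_reflect]
    refine sum_congr rfl fun i hi => ?_
    have hil : i < l := mem_range.1 hi
    congr 1
    omega
  have hAD : ∑ j ∈ range l, (t ^ (-(j : ℤ)) - 1)
      = (∑ i ∈ range l, (t ^ ((i : ℤ) + 1 - l) * q ^ ((p i : ℤ)) - 1))
        + ∑ i ∈ range l, (t ^ ((i : ℤ) + 1 - l) - t ^ ((i : ℤ) + 1 - l) * q ^ ((p i : ℤ))) := by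
    calc ∑ j ∈ range l, (t ^ (-(j : ℤ)) - 1)
        = ∑ j ∈ range l, t ^ (-(j : ℤ)) - ∑ _j ∈ range l, (1 : K) := sum_sub_distrib _ _
      _ = ∑ i ∈ range l, t ^ ((i : ℤ) + 1 - l) - ∑ _i ∈ range l, (1 : K) := by rw [hrefl]
      _ = _ := by
          rw [← sum_sub_distrib, ← sum_add_distrib]
          exact sum_congr rfl fun i _ => by ring
  -- assemble
  calc (1 - t) * ∑ j ∈ range l, ∑ i ∈ range j,
        (t ^ ((i : ℤ) + 1 - l) * q ^ (p i : ℤ)) / (t ^ ((j : ℤ) + 1 - l) * q ^ (p j : ℤ))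
      = ∑ j ∈ range l, ((1 - t) * ∑ i ∈ range j,
          t ^ ((i : ℤ) - (j : ℤ)) * q ^ ((p i : ℤ) - (p j : ℤ))) := step1
    _ = ∑ j ∈ range l, (((1 - t) * ∑ i ∈ range j, t ^ ((i : ℤ) + -(j : ℤ)))
        - ∑ i ∈ range j, ∑ c ∈ Finset.Ico (p j) (p i),
            ((q⁻¹ - 1) * q ^ ((p i : ℤ) - (c : ℤ))) * ((1 - t) * t ^ ((i : ℤ) - (j : ℤ)))) :=
        sum_congr rfl step2
    _ = (∑ j ∈ range l, (t ^ (-(j : ℤ)) - 1))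
        - ∑ j ∈ range l, ∑ i ∈ range j, ∑ c ∈ Finset.Ico (p j) (p i),
            ((q⁻¹ - 1) * q ^ ((p i : ℤ) - (c : ℤ))) * ((1 - t) * t ^ ((i : ℤ) - (j : ℤ))) := by
        rw [sum_sub_distrib]
        congr 1
        refine sum_congr rfl fun j hj => ?_
        rw [geom_up ht]
        have e0 : (j : ℤ) + -(j : ℤ) = 0 := by ring
        rw [e0, zpow_zero]
    _ = (∑ j ∈ range l, (t ^ (-(j : ℤ)) - 1))
        - ∑ i ∈ range l, ∑ c ∈ range (p i),
            ((q⁻¹ - 1) * q ^ ((p i : ℤ) - (c : ℤ)))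
              * (t ^ ((i : ℤ) + 1 - l) - t ^ ((i : ℤ) + 1 - (colHeight p l c : ℤ))) := by
        rw [stepB]
        congr 1
        refine sum_congr rfl fun i hi => sum_congr rfl fun c hc => stepT i hi c hc
    _ = (q⁻¹ - 1) * (∑ r ∈ range l, ∑ c ∈ range (p r),
          q ^ (armZ p r c + 1) * t ^ (-(legZ p l r c)))
        + ∑ i ∈ range l, (t ^ ((i : ℤ) + 1 - l) * q ^ ((p i : ℤ)) - 1) := by
        linear_combination hAD - hBU - hM2
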